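/- Assign the weights 2, 10, 12, 14, 36 to the variables X₀, X₁, X₂, X₃, X₄ of MvPolynomial (Fin 5) (ZMod 3), let P = X₀³X₄ − X₁³X₂ − X₀²X₁X₃² + X₃³ (which is weighted homogeneous of weight 42), and let Q = MvPolynomial (Fin 5) (ZMod 3) ⧸ Ideal.span {P}. Then for every k ∈ ℕ, the image in Q of the submodule of weighted-homogeneous polynomials of weighted degree k has dimension r(k) over ZMod 3, where r(k) = #{(a,b,c,d,e) ∈ ℕ⁵ : 2a + 10b + 12c + 14d + 36e = k and d ≤ 2}. -/

import Mathlib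

open MvPolynomial Finsupp

section Aux

variable {σ : Type*} [Fintype σ] {K : Type*} [Field K]

theorem aux_wHC_mul {w : σ → ℕ} {P : MvPolynomial σ K} {a : ℕ}
    (hP : P.IsWeightedHomogeneous w a) (g : MvPolynomial σ K) (k : ℕ) :
    weightedHomogeneousComponent w k (P * g) =
      if a ≤ k then P * weightedHomogeneousComponent w (k - a) g else 0 := by
  classical
  have hfin := weightedHomogeneousComponent_finsupp (w := w) g
  have hsupp : (Function.support fun m => P * weightedHomogeneousComponent w m g).Finite := by
    refine hfin.subset fun m hm => ?_
    simp only [Function.mem_support] at hm ⊢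
    exact fun h0 => hm (by rw [h0, mul_zero])
  have step : weightedHomogeneousComponent w k (P * g)
      = ∑ᶠ m, weightedHomogeneousComponent w k (P * weightedHomogeneousComponent w m g) := by
    conv_lhs => rw [← sum_weightedHomogeneousComponent w (φ := g), mul_finsum _ _]
    exact (weightedHomogeneousComponent w k).toAddMonoidHom.map_finsum hsupp
  rw [step]
  by_cases hak : a ≤ k
  · rw [if_pos hak]
    rw [finsum_eq_single _ (k - a) fun m hm =>
      (hP.mul (weightedHomogeneousComponent_isWeightedHomogeneous m g)).weightedHomogeneousComponent_ne
        k (by omega)]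
    have h1 : a + (k - a) = k := by omega
    have h2 := hP.mul (weightedHomogeneousComponent_isWeightedHomogeneous (k - a) g)
    rw [h1] at h2
    exact h2.weightedHomogeneousComponent_same
  · rw [if_neg hak]
    refine finsum_eq_zero_of_forall_eq_zero fun m => ?_
    exact (hP.mul (weightedHomogeneousComponent_isWeightedHomogeneous m g)).weightedHomogeneousComponent_ne
      k (by omega)

theorem aux_finite {w : σ → ℕ} (hw : ∀ i, w i ≠ 0) (k : ℕ) :
    {d : σ →₀ ℕ | weight w d = k}.Finite := by
  classical
  have : {d : σ →₀ ℕ | weight w d = k} ⊆ Set.Iic (equivFunOnFinite.symm fun _ => k) := by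
    intro d hd s
    simp only [coe_equivFunOnFinite_symm]
    exact hd ▸ le_weight w (hw s) d
  exact (Set.finite_Iic _).subset this

noncomputable def auxEquiv (w : σ → ℕ) (k : ℕ) :
    (weightedHomogeneousSubmodule K w k) ≃ₗ[K] ({d : σ →₀ ℕ | weight w d = k} →₀ K) :=
  (LinearEquiv.ofEq _ _ (weightedHomogeneousSubmodule_eq_finsupp_supported K w k)).trans
    (AddMonoidAlgebra.supportedEquivFinsupp _)

theorem aux_finrank {w : σ → ℕ} (hw : ∀ i, w i ≠ 0) (k : ℕ) :
    Module.finrank K (weightedHomogeneousSubmodule K w k)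
      = Nat.card {d : σ →₀ ℕ // weight w d = k} := by
  have hfin : Finite {d : σ →₀ ℕ | weight w d = k} := (aux_finite hw k)
  haveI : Fintype {d : σ →₀ ℕ | weight w d = k} := Fintype.ofFinite _
  haveI : Fintype ↥{d : σ →₀ ℕ | weight w d = k} := Fintype.ofFinite _
  haveI : Finite {d : σ →₀ ℕ // weight w d = k} := hfin
  haveI : Fintype {d : σ →₀ ℕ // weight w d = k} := Fintype.ofFinite _
  rw [(auxEquiv (K := K) w k).finrank_eq, Module.finrank_finsupp_self, Nat.card_eq_fintype_card]
  exact Fintype.card_congr (Equiv.subtypeEquivRight fun _ => Iff.rfl)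

theorem aux_findim {w : σ → ℕ} (hw : ∀ i, w i ≠ 0) (k : ℕ) :
    FiniteDimensional K (weightedHomogeneousSubmodule K w k) := by
  have hfin : Finite {d : σ →₀ ℕ | weight w d = k} := (aux_finite hw k)
  haveI : Fintype {d : σ →₀ ℕ | weight w d = k} := Fintype.ofFinite _
  exact Module.Finite.equiv (auxEquiv (K := K) w k).symm

theorem aux_dim {w : σ → ℕ} (hw : ∀ i, w i ≠ 0) {P : MvPolynomial σ K} {a : ℕ}
    (hP : P.IsWeightedHomogeneous w a) (hP0 : P ≠ 0) (k : ℕ) :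
    Module.finrank K
        (Submodule.map (Ideal.Quotient.mkₐ K (Ideal.span {P})).toLinearMap
          (weightedHomogeneousSubmodule K w k)) +
      (if a ≤ k then Nat.card {d : σ →₀ ℕ // weight w d = k - a} else 0)
      = Nat.card {d : σ →₀ ℕ // weight w d = k} := by
  classical
  set V := weightedHomogeneousSubmodule K w k with hV
  set f := (Ideal.Quotient.mkₐ K (Ideal.span {P})).toLinearMap with hf
  haveI : FiniteDimensional K V := aux_findim hw k
  set g : V →ₗ[K] _ := f.comp V.subtype with hg
  have hrange : LinearMap.range g = Submodule.map f V := by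
    rw [hg, LinearMap.range_comp, Submodule.range_subtype]
  -- the intersection submodule
  set S : Submodule K (MvPolynomial σ K) := (Ideal.span {P}).restrictScalars K with hS
  have hker : LinearMap.ker g = Submodule.comap V.subtype (S ⊓ V) := by
    ext x
    simp only [hg, LinearMap.mem_ker, LinearMap.comp_apply, Submodule.coe_subtype,
      Submodule.mem_comap, Submodule.mem_inf, hS, Submodule.restrictScalars_mem]
    constructor
    · intro hx
      exact ⟨(Ideal.Quotient.eq_zero_iff_mem).1 hx, x.2⟩
    · intro hx
      exact (Ideal.Quotient.eq_zero_iff_mem).2 hx.1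
  have hinterrank : Module.finrank K (LinearMap.ker g)
      = Module.finrank K (S ⊓ V : Submodule K (MvPolynomial σ K)) := by
    rw [hker]
    exact (Submodule.comapSubtypeEquivOfLe inf_le_right).finrank_eq
  have hmul_inj : Function.Injective (LinearMap.mulLeft K P) := fun x y h => by
    simpa using mul_left_cancel₀ hP0 (by simpa using h)
  have hinter : (S ⊓ V : Submodule K (MvPolynomial σ K))
      = if a ≤ k then
          Submodule.map (LinearMap.mulLeft K P) (weightedHomogeneousSubmodule K w (k - a))
        else ⊥ := by
    by_cases hak : a ≤ k
    · rw [if_pos hak]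
      ext q
      simp only [Submodule.mem_inf, hS, Submodule.restrictScalars_mem, Submodule.mem_map]
      constructor
      · rintro ⟨hq1, hq2⟩
        obtain ⟨c, hc⟩ := Ideal.mem_span_singleton'.1 hq1
        refine ⟨weightedHomogeneousComponent w (k - a) c,
          weightedHomogeneousComponent_mem w c (k - a), ?_⟩
        have : weightedHomogeneousComponent w k q = q :=
          (hq2 : q.IsWeightedHomogeneous w k).weightedHomogeneousComponent_same
        rw [LinearMap.mulLeft_apply, ← this, ← hc, mul_comm c P, aux_wHC_mul hP c k, if_pos hak]
      · rintro ⟨h, hh, rfl⟩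
        refine ⟨Ideal.mem_span_singleton'.2 ⟨h, by rw [LinearMap.mulLeft_apply, mul_comm]⟩, ?_⟩
        have h2 := hP.mul (hh : IsWeightedHomogeneous w h (k - a))
        have h1 : a + (k - a) = k := by omega
        rw [h1] at h2
        exact h2
    · rw [if_neg hak]
      rw [eq_bot_iff]
      rintro q ⟨hq1, hq2⟩
      obtain ⟨c, hc⟩ := Ideal.mem_span_singleton'.1 hq1
      have : weightedHomogeneousComponent w k q = q :=
        (hq2 : q.IsWeightedHomogeneous w k).weightedHomogeneousComponent_same
      have hq0 : q = 0 := by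
        rw [← this, ← hc, mul_comm c P, aux_wHC_mul hP c k, if_neg hak]
      simp [hq0]
  have hintercard : Module.finrank K (S ⊓ V : Submodule K (MvPolynomial σ K))
      = if a ≤ k then Nat.card {d : σ →₀ ℕ // weight w d = k - a} else 0 := by
    rw [hinter]
    by_cases hak : a ≤ k
    · rw [if_pos hak, if_pos hak, ← aux_finrank (K := K) hw (k - a)]
      exact ((Submodule.equivMapOfInjective _ hmul_inj _).symm).finrank_eq
    · rw [if_neg hak, if_neg hak, finrank_bot]
  have hrank := LinearMap.finrank_range_add_finrank_ker g
  rw [hrange, hinterrank, hintercard] at hrank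
  rw [hrank, ← aux_finrank (K := K) hw k]

end Aux

section Count

/-- the tuple-weight sum -/
private def tsum5 (v : ℕ × ℕ × ℕ × ℕ × ℕ) : ℕ :=
  2 * v.1 + 10 * v.2.1 + 12 * v.2.2.1 + 14 * v.2.2.2.1 + 36 * v.2.2.2.2

theorem weight_eval (d : Fin 5 →₀ ℕ) :
    weight (![2, 10, 12, 14, 36] : Fin 5 → ℕ) d
      = 2 * d 0 + 10 * d 1 + 12 * d 2 + 14 * d 3 + 36 * d 4 := by
  rw [weight_apply, Finsupp.sum_fintype _ _ (fun i => by simp)]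
  simp [Fin.sum_univ_five]
  ring

/-- finsupps with given weight correspond to tuples -/
noncomputable def tupEquiv (k : ℕ) :
    {d : Fin 5 →₀ ℕ // weight (![2, 10, 12, 14, 36] : Fin 5 → ℕ) d = k}
      ≃ {v : ℕ × ℕ × ℕ × ℕ × ℕ // tsum5 v = k} where
  toFun d := ⟨(d.1 0, d.1 1, d.1 2, d.1 3, d.1 4), by
    have := d.2; rw [weight_eval] at this; exact this⟩
  invFun v := ⟨equivFunOnFinite.symm ![v.1.1, v.1.2.1, v.1.2.2.1, v.1.2.2.2.1, v.1.2.2.2.2], by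
    rw [weight_eval]
    simp only [coe_equivFunOnFinite_symm]
    simpa [tsum5] using v.2⟩
  left_inv d := by
    ext i
    fin_cases i <;> simp
  right_inv v := by
    ext <;> simp

theorem count_split (k : ℕ) :
    Nat.card {d : Fin 5 →₀ ℕ // weight (![2, 10, 12, 14, 36] : Fin 5 → ℕ) d = k}
      = Nat.card {v : ℕ × ℕ × ℕ × ℕ × ℕ //
          2 * v.1 + 10 * v.2.1 + 12 * v.2.2.1 + 14 * v.2.2.2.1 + 36 * v.2.2.2.2 = k ∧
          v.2.2.2.1 ≤ 2} +
        (if 42 ≤ k then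
          Nat.card {d : Fin 5 →₀ ℕ // weight (![2, 10, 12, 14, 36] : Fin 5 → ℕ) d = k - 42}
         else 0) := by
  have hw : ∀ i : Fin 5, (![2, 10, 12, 14, 36] : Fin 5 → ℕ) i ≠ 0 := by decide
  have hfinT : ∀ m : ℕ, Finite {d : Fin 5 →₀ ℕ // weight (![2, 10, 12, 14, 36] : Fin 5 → ℕ) d = m} :=
    fun m => aux_finite hw m
  have hfinS : ∀ m : ℕ, Finite {v : ℕ × ℕ × ℕ × ℕ × ℕ // tsum5 v = m} := by
    intro m
    haveI := hfinT m
    exact Finite.of_equiv _ (tupEquiv m)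
  rw [Nat.card_congr (tupEquiv k)]
  by_cases h42 : 42 ≤ k
  · rw [if_pos h42, Nat.card_congr (tupEquiv (k - 42))]
    have e : {v : ℕ × ℕ × ℕ × ℕ × ℕ // tsum5 v = k}
        ≃ ({v : ℕ × ℕ × ℕ × ℕ × ℕ //
            2 * v.1 + 10 * v.2.1 + 12 * v.2.2.1 + 14 * v.2.2.2.1 + 36 * v.2.2.2.2 = k ∧
            v.2.2.2.1 ≤ 2} ⊕ {v : ℕ × ℕ × ℕ × ℕ × ℕ // tsum5 v = k - 42}) := by
      refine ⟨fun x => if h : x.1.2.2.2.1 ≤ 2 then Sum.inl ⟨x.1, x.2, h⟩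
          else Sum.inr ⟨(x.1.1, x.1.2.1, x.1.2.2.1, x.1.2.2.2.1 - 3, x.1.2.2.2.2), ?_⟩,
        fun y => y.elim (fun v => ⟨v.1, v.2.1⟩)
          (fun v => ⟨(v.1.1, v.1.2.1, v.1.2.2.1, v.1.2.2.2.1 + 3, v.1.2.2.2.2), ?_⟩),
        ?_, ?_⟩
      · have := x.2; simp only [tsum5] at this ⊢; omega
      · have := v.2; simp only [tsum5] at this ⊢; omega
      · intro x
        by_cases h : x.1.2.2.2.1 ≤ 2
        · simp [h]
        · dsimp only
          rw [dif_neg h]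
          apply Subtype.ext
          show (x.1.1, x.1.2.1, x.1.2.2.1, x.1.2.2.2.1 - 3 + 3, x.1.2.2.2.2) = x.1
          obtain ⟨⟨a, b, c, d, e⟩, hv⟩ := x
          simp only at h ⊢
          rw [Nat.sub_add_cancel (by omega)]
      · rintro (v | v)
        · dsimp only [Sum.elim]
          rw [dif_pos v.2.2]
        · dsimp only [Sum.elim]
          rw [dif_neg (show ¬ v.1.2.2.2.1 + 3 ≤ 2 by omega)]
          refine congrArg Sum.inr (Subtype.ext ?_)
          show (v.1.1, v.1.2.1, v.1.2.2.1, v.1.2.2.2.1 + 3 - 3, v.1.2.2.2.2) = v.1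
          obtain ⟨⟨a, b, c, d, e⟩, hv⟩ := v
          simp
    rw [Nat.card_congr e]
    haveI := hfinS (k - 42)
    have : Finite {v : ℕ × ℕ × ℕ × ℕ × ℕ //
        2 * v.1 + 10 * v.2.1 + 12 * v.2.2.1 + 14 * v.2.2.2.1 + 36 * v.2.2.2.2 = k ∧
        v.2.2.2.1 ≤ 2} := by
      haveI := hfinS k
      exact Finite.of_injective
        (fun v => (⟨v.1, v.2.1⟩ : {v : ℕ × ℕ × ℕ × ℕ × ℕ // tsum5 v = k}))
        (by intro a b h; apply Subtype.ext; simpa [Subtype.ext_iff] using h)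
    exact Nat.card_sum
  · rw [if_neg h42, add_zero]
    apply Nat.card_congr
    refine Equiv.subtypeEquivRight fun v => ?_
    constructor
    · intro h; refine ⟨h, ?_⟩
      simp only [tsum5] at h; omega
    · exact fun h => h.1

end Count

/-- With weights `(2,10,12,14,36)` on the variables of `(ZMod 3)[X₀,…,X₄]`, the relation
`P = X₀³X₄ − X₁³X₂ − X₀²X₁X₃² + X₃³` is weighted homogeneous of weight 42, and for every
`k` the image in `Q = (ZMod 3)[X₀,…,X₄] ⧸ (P)` of the weighted-homogeneous part of weight
`k` has dimension `r(k) = #{(a,b,c,d,e) ∈ ℕ⁵ : 2a+10b+12c+14d+36e = k, d ≤ 2}`. -/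
theorem quotient_graded_dimension
    (w : Fin 5 → ℕ) (hw : w = ![2, 10, 12, 14, 36])
    (P : MvPolynomial (Fin 5) (ZMod 3))
    (hP : P = X 0 ^ 3 * X 4 - X 1 ^ 3 * X 2 - X 0 ^ 2 * X 1 * X 3 ^ 2 + X 3 ^ 3)
    (r : ℕ → ℕ)
    (hr : ∀ k, r k = Nat.card {v : ℕ × ℕ × ℕ × ℕ × ℕ //
      2 * v.1 + 10 * v.2.1 + 12 * v.2.2.1 + 14 * v.2.2.2.1 + 36 * v.2.2.2.2 = k ∧
      v.2.2.2.1 ≤ 2}) :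
    P.IsWeightedHomogeneous w 42 ∧
    ∀ k : ℕ,
      Module.finrank (ZMod 3)
        (Submodule.map (Ideal.Quotient.mkₐ (ZMod 3) (Ideal.span {P})).toLinearMap
          (weightedHomogeneousSubmodule (ZMod 3) w k)) = r k := by
  subst hw hP
  set w : Fin 5 → ℕ := ![2, 10, 12, 14, 36] with hw
  have hX : ∀ i : Fin 5,
      IsWeightedHomogeneous w (X i : MvPolynomial (Fin 5) (ZMod 3)) (w i) :=
    fun i => isWeightedHomogeneous_X _ _ _
  have t1 : IsWeightedHomogeneous w
      ((X 0 : MvPolynomial (Fin 5) (ZMod 3)) ^ 3 * X 4) 42 := by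
    have h := (hX 0).mul ((hX 0).mul ((hX 0).mul (hX 4)))
    have e : (X 0 : MvPolynomial (Fin 5) (ZMod 3)) ^ 3 * X 4 = X 0 * (X 0 * (X 0 * X 4)) := by ring
    have hd : w 0 + (w 0 + (w 0 + w 4)) = 42 := by rw [hw]; decide
    rw [e]; rw [hd] at h; exact h
  have t2 : IsWeightedHomogeneous w
      ((X 1 : MvPolynomial (Fin 5) (ZMod 3)) ^ 3 * X 2) 42 := by
    have h := (hX 1).mul ((hX 1).mul ((hX 1).mul (hX 2)))
    have e : (X 1 : MvPolynomial (Fin 5) (ZMod 3)) ^ 3 * X 2 = X 1 * (X 1 * (X 1 * X 2)) := by ring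
    have hd : w 1 + (w 1 + (w 1 + w 2)) = 42 := by rw [hw]; decide
    rw [e]; rw [hd] at h; exact h
  have t3 : IsWeightedHomogeneous w
      ((X 0 : MvPolynomial (Fin 5) (ZMod 3)) ^ 2 * X 1 * X 3 ^ 2) 42 := by
    have h := (hX 0).mul ((hX 0).mul ((hX 1).mul ((hX 3).mul (hX 3))))
    have e : (X 0 : MvPolynomial (Fin 5) (ZMod 3)) ^ 2 * X 1 * X 3 ^ 2
        = X 0 * (X 0 * (X 1 * (X 3 * X 3))) := by ring
    have hd : w 0 + (w 0 + (w 1 + (w 3 + w 3))) = 42 := by rw [hw]; decide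
    rw [e]; rw [hd] at h; exact h
  have t4 : IsWeightedHomogeneous w ((X 3 : MvPolynomial (Fin 5) (ZMod 3)) ^ 3) 42 := by
    have h := (hX 3).mul ((hX 3).mul (hX 3))
    have e : (X 3 : MvPolynomial (Fin 5) (ZMod 3)) ^ 3 = X 3 * (X 3 * X 3) := by ring
    have hd : w 3 + (w 3 + w 3) = 42 := by rw [hw]; decide
    rw [e]; rw [hd] at h; exact h
  have hPhom : IsWeightedHomogeneous w
      ((X 0 : MvPolynomial (Fin 5) (ZMod 3)) ^ 3 * X 4 - X 1 ^ 3 * X 2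
        - X 0 ^ 2 * X 1 * X 3 ^ 2 + X 3 ^ 3) 42 := by
    exact Submodule.add_mem (weightedHomogeneousSubmodule (ZMod 3) w 42)
      (Submodule.sub_mem _ (Submodule.sub_mem _ t1 t2) t3) t4
  refine ⟨hPhom, fun k => ?_⟩
  have hw' : ∀ i : Fin 5, w i ≠ 0 := by rw [hw]; decide
  have hP0 : ((X 0 : MvPolynomial (Fin 5) (ZMod 3)) ^ 3 * X 4 - X 1 ^ 3 * X 2
      - X 0 ^ 2 * X 1 * X 3 ^ 2 + X 3 ^ 3) ≠ 0 := by
    intro h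
    have h2 := congrArg (eval (![0, 0, 0, 1, 0] : Fin 5 → ZMod 3)) h
    simp at h2
  have h1 := aux_dim (K := ZMod 3) hw' hPhom hP0 k
  have h2 := count_split k
  rw [← hw] at h2
  rw [hr k]
  rw [h2] at h1
  omega
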